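/- (Theorem 1, continuous time.) Let S ⊂ ℝⁿ be compact and convex, A ⊂ ℝᵐ be compact and convex, f : ℝⁿ × ℝᵐ → ℝⁿ, C ∈ ℝ^{1×n}, d ∈ ℝ, r > 0, and let B := {s ∈ S : C s ∈ [d − r, d]} be the convex hull of a finite vertex set V ⊂ ℝⁿ. Let μ : S → A be a policy that is affine on B, i.e. μ(s) = D s + e on B for some D ∈ ℝ^{m×n}, e ∈ ℝᵐ. Let ε ≥ 0 be an approximation measure, i.e. there exist A₀ ∈ ℝ^{n×n}, B₀ ∈ ℝ^{n×m}, c₀ ∈ ℝⁿ with |C f(s, a) − C(A₀ s + B₀ a + c₀)| ≤ ε for all s ∈ B and all a ∈ A. If the repulsion condition C f(v, μ(v)) ≤ −2ε holds for every v ∈ V, then every differentiable trajectory s : [0, ∞) → ℝⁿ satisfying s(t) ∈ S for all t ≥ 0, s'(t) = f(s(t), μ(s(t))) for all t ≥ 0, and C s(0) < d, satisfies C s(t) < d for all t ≥ 0. -/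

import Mathlib

open Matrix

/-- **Theorem 1 (continuous time).** Let `S ⊆ ℝⁿ` be compact convex, `A ⊆ ℝᵐ` compact
convex, `B := {s ∈ S : C s ∈ [d - r, d]}` the buffer, given as the convex hull of a finite
vertex set `V`. Let `μ : S → A` be a policy which is affine on `B`, and let `ε ≥ 0` be an
approximation measure with witnesses `A₀, B₀, c₀`. If the repulsion condition
`C f(v, μ(v)) ≤ -2ε` holds at every vertex `v ∈ V`, then every differentiable closed-loop
trajectory remaining in `S` and starting with `C s(0) < d` satisfies `C s(t) < d` for all
`t ≥ 0`. -/
theorem policed_rl_safety_continuous {n m : ℕ}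
    (S : Set (Fin n → ℝ)) (hScomp : IsCompact S) (hSconv : Convex ℝ S)
    (A : Set (Fin m → ℝ)) (hAcomp : IsCompact A) (hAconv : Convex ℝ A)
    (f : (Fin n → ℝ) → (Fin m → ℝ) → (Fin n → ℝ))
    (C : Fin n → ℝ) (d r : ℝ) (hr : 0 < r)
    (B : Set (Fin n → ℝ)) (hBdef : B = {s ∈ S | C ⬝ᵥ s ∈ Set.Icc (d - r) d})
    (V : Finset (Fin n → ℝ)) (hBhull : B = convexHull ℝ (V : Set (Fin n → ℝ)))
    (μ : (Fin n → ℝ) → (Fin m → ℝ)) (hμadm : ∀ s ∈ S, μ s ∈ A)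
    (D : Matrix (Fin m) (Fin n) ℝ) (e : Fin m → ℝ)
    (hμaff : ∀ s ∈ B, μ s = D *ᵥ s + e)
    (ε : ℝ) (hε : 0 ≤ ε)
    (A₀ : Matrix (Fin n) (Fin n) ℝ) (B₀ : Matrix (Fin n) (Fin m) ℝ) (c₀ : Fin n → ℝ)
    (happrox : ∀ s ∈ B, ∀ a ∈ A, |C ⬝ᵥ f s a - C ⬝ᵥ (A₀ *ᵥ s + B₀ *ᵥ a + c₀)| ≤ ε)
    (hrep : ∀ v ∈ V, C ⬝ᵥ f v (μ v) ≤ -(2 * ε)) :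
    ∀ s : ℝ → (Fin n → ℝ),
      (∀ t : ℝ, 0 ≤ t → DifferentiableAt ℝ s t) →
      (∀ t : ℝ, 0 ≤ t → s t ∈ S) →
      (∀ t : ℝ, 0 ≤ t → deriv s t = f (s t) (μ (s t))) →
      C ⬝ᵥ s 0 < d →
      ∀ t : ℝ, 0 ≤ t → C ⬝ᵥ s t < d := by
  have hVB : (V : Set (Fin n → ℝ)) ⊆ B := by
    rw [hBhull]; exact subset_convexHull ℝ _
  have hBS : B ⊆ S := by rw [hBdef]; exact fun x hx => hx.1
  set L : (Fin n → ℝ) → ℝ := fun x => C ⬝ᵥ ((A₀ + B₀ * D) *ᵥ x) with hL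
  have hLlin : IsLinearMap ℝ L := by
    constructor
    · intro x y; simp [hL, Matrix.mulVec_add, dotProduct_add]
    · intro c x; simp [hL, Matrix.mulVec_smul, dotProduct_smul]
  set c : ℝ := C ⬝ᵥ (B₀ *ᵥ e + c₀) with hc
  have hLc : ∀ x, C ⬝ᵥ (A₀ *ᵥ x + B₀ *ᵥ (D *ᵥ x + e) + c₀) = L x + c := by
    intro x
    simp only [hL, hc, Matrix.add_mulVec, Matrix.mulVec_add, dotProduct_add,
      Matrix.mulVec_mulVec]
    ring
  have hBK : B ⊆ {x | L x ≤ -ε - c} := by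
    rw [hBhull]
    apply convexHull_min _ (convex_halfSpace_le hLlin _)
    intro v hv
    have hvB : v ∈ B := hVB hv
    have h1 := happrox v hvB (μ v) (hμadm v (hBS hvB))
    have h2 : C ⬝ᵥ (A₀ *ᵥ v + B₀ *ᵥ (μ v) + c₀) = L v + c := by
      rw [hμaff v hvB]; exact hLc v
    have h3 := hrep v hv
    rw [h2] at h1
    have h4 := abs_le.1 h1
    have := h4.1
    simp only [Set.mem_setOf_eq]
    linarith
  have hkey : ∀ x ∈ B, C ⬝ᵥ f x (μ x) ≤ 0 := by
    intro x hx
    have h1 := happrox x hx (μ x) (hμadm x (hBS hx))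
    have h2 : C ⬝ᵥ (A₀ *ᵥ x + B₀ *ᵥ (μ x) + c₀) = L x + c := by
      rw [hμaff x hx]; exact hLc x
    have h3 := hBK hx
    rw [h2] at h1
    have h4 := abs_le.1 h1
    simp only [Set.mem_setOf_eq] at h3
    linarith [h4.2]
  intro s hdiff hS hode h0
  set g : ℝ → ℝ := fun t => C ⬝ᵥ s t with hg
  have hgderiv : ∀ t : ℝ, 0 ≤ t → HasDerivAt g (C ⬝ᵥ f (s t) (μ (s t))) t := by
    intro t ht
    have hs : HasDerivAt s (deriv s t) t := (hdiff t ht).hasDerivAt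
    have hcoord : ∀ i, HasDerivAt (fun τ => s τ i) (deriv s t i) t := hasDerivAt_pi.1 hs
    have hsum : HasDerivAt (fun τ => ∑ i, C i * s τ i) (∑ i, C i * deriv s t i) t :=
      HasDerivAt.fun_sum fun i _ => (hcoord i).const_mul (C i)
    rw [hode t ht] at hsum
    convert hsum using 1 <;> simp [hg, dotProduct]
  have hgcont : ∀ t : ℝ, 0 ≤ t → ContinuousAt g t := fun t ht =>
    (hgderiv t ht).differentiableAt.continuousAt
  by_contra hcon
  push_neg at hcon
  obtain ⟨t₁, ht₁, hgt₁⟩ := hcon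
  set E : Set ℝ := {t | 0 ≤ t ∧ d ≤ g t} with hE
  have hEne : E.Nonempty := ⟨t₁, ht₁, hgt₁⟩
  have hEbdd : BddBelow E := ⟨0, fun x hx => hx.1⟩
  set T : ℝ := sInf E with hT
  have hT0 : 0 ≤ T := le_csInf hEne fun x hx => hx.1
  have hgTd : d ≤ g T := by
    obtain ⟨u, -, hu, huE⟩ := exists_seq_tendsto_sInf hEne hEbdd
    have : Filter.Tendsto (g ∘ u) Filter.atTop (nhds (g T)) :=
      (hgcont T hT0).tendsto.comp hu
    exact ge_of_tendsto this (Filter.Eventually.of_forall fun k => (huE k).2)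
  have hTpos : 0 < T := by
    rcases hT0.lt_or_eq with h | h
    · exact h
    · exfalso; rw [← h] at hgTd; exact absurd hgTd (not_le.2 h0)
  have hcT := hgcont T hT0
  rw [Metric.continuousAt_iff] at hcT
  obtain ⟨δ, hδ, hδ'⟩ := hcT (g T - (d - r)) (by linarith)
  set t₀ : ℝ := T - min δ T / 2 with ht₀def
  have hmin : 0 < min δ T := lt_min hδ hTpos
  have ht₀0 : 0 < t₀ := by
    have : min δ T ≤ T := min_le_right _ _
    simp only [ht₀def]; linarith
  have ht₀T : t₀ < T := by simp only [ht₀def]; linarith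
  have hnear : ∀ t ∈ Set.Icc t₀ T, d - r < g t := by
    intro t htI
    have hdist : dist t T < δ := by
      rw [Real.dist_eq, abs_sub_lt_iff]
      constructor
      · linarith [htI.2]
      · have h1 : min δ T ≤ δ := min_le_left _ _
        have := htI.1
        simp only [ht₀def] at this
        linarith
    have := hδ' hdist
    rw [Real.dist_eq, abs_sub_lt_iff] at this
    linarith [this.2]
  have hBmem : ∀ t ∈ Set.Ioo t₀ T, s t ∈ B := by
    intro t htI
    have htpos : 0 ≤ t := le_of_lt (lt_trans ht₀0 htI.1)
    have hltd : g t < d := by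
      by_contra hge
      push_neg at hge
      exact absurd (csInf_le hEbdd ⟨htpos, hge⟩) (not_le.2 htI.2)
    rw [hBdef]
    refine ⟨hS t htpos, ?_, le_of_lt hltd⟩
    exact le_of_lt (hnear t ⟨le_of_lt htI.1, le_of_lt htI.2⟩)
  have hanti : AntitoneOn g (Set.Icc t₀ T) := by
    apply antitoneOn_of_deriv_nonpos (convex_Icc _ _)
    · intro t htI
      exact (hgcont t (le_trans ht₀0.le htI.1)).continuousWithinAt
    · rw [interior_Icc]
      intro t htI
      exact (hgderiv t (le_of_lt (lt_trans ht₀0 htI.1))).differentiableAt.differentiableWithinAt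
    · rw [interior_Icc]
      intro t htI
      rw [(hgderiv t (le_of_lt (lt_trans ht₀0 htI.1))).deriv]
      exact hkey (s t) (hBmem t htI)
  have hmono := hanti ⟨le_refl t₀, ht₀T.le⟩ ⟨ht₀T.le, le_refl T⟩ ht₀T.le
  have hgt₀ : g t₀ < d := by
    by_contra hge
    push_neg at hge
    exact absurd (csInf_le hEbdd ⟨ht₀0.le, hge⟩) (not_le.2 ht₀T)
  linarith
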